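/- For any real 2-dimensional linear subspace P ⊂ ℂ² that is not a complex line, the set of slopes λ ∈ ℙ¹(ℂ) = ℂ ∪ {∞} such that the complex line of slope λ through the origin is not transverse to P is a circle on the Riemann sphere (i.e., the image of ℝ ∪ {∞} under a Möbius transformation, equivalently a Euclidean circle or a line in ℂ together with ∞). -/

import Mathlib

/-- The complex line `{y = l·x}` through the origin, as a real subspace of ℂ². -/
noncomputable def lineSlope (l : ℂ) : Submodule ℝ (ℂ × ℂ) where
  carrier := {v | v.2 = l * v.1}
  add_mem' := by
    intro a b ha hb
    simp only [Set.mem_setOf_eq, Prod.fst_add, Prod.snd_add] at *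
    rw [ha, hb]; ring
  zero_mem' := by simp
  smul_mem' := by
    intro r v hv
    simp only [Set.mem_setOf_eq, Prod.smul_fst, Prod.smul_snd, Complex.real_smul] at *
    rw [hv]; ring

/-- The vertical complex line `{x = 0}` (slope `∞`), as a real subspace of ℂ². -/
noncomputable def vertLine : Submodule ℝ (ℂ × ℂ) where
  carrier := {v | v.1 = 0}
  add_mem' := by intro a b ha hb; simp_all [Prod.fst_add]
  zero_mem' := by simp
  smul_mem' := by intro r v hv; simp_all [Prod.smul_fst]

/-- The standard complex structure (multiplication by `i`) as a real-linear map. -/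
noncomputable def JL : (ℂ × ℂ) →ₗ[ℝ] ℂ × ℂ where
  toFun v := Complex.I • v
  map_add' := by intro a b; simp [smul_add]
  map_smul' := by intro r v; exact smul_comm Complex.I r v


open Complex

lemma mem_lineSlope (l : ℂ) (v : ℂ × ℂ) : v ∈ lineSlope l ↔ v.2 = l * v.1 := Iff.rfl
lemma mem_vertLine (v : ℂ × ℂ) : v ∈ vertLine ↔ v.1 = 0 := Iff.rfl

lemma finrank_CC : Module.finrank ℝ (ℂ × ℂ) = 4 := by
  simp [Module.finrank_prod, Complex.finrank_real_complex]

noncomputable def slopeMap (l : ℂ) : ℂ →ₗ[ℝ] ℂ × ℂ where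
  toFun z := (z, l * z)
  map_add' := by intro a b; simp [mul_add]
  map_smul' := by
    intro r z
    simp [Prod.smul_def, Complex.real_smul]
    ring

lemma lineSlope_eq_range (l : ℂ) : lineSlope l = LinearMap.range (slopeMap l) := by
  ext v
  simp only [mem_lineSlope, LinearMap.mem_range]
  constructor
  · intro h; exact ⟨v.1, by simp [slopeMap, ← h]⟩
  · rintro ⟨z, hz⟩; rw [← hz]; rfl

lemma finrank_lineSlope (l : ℂ) : Module.finrank ℝ (lineSlope l) = 2 := by
  rw [lineSlope_eq_range]
  have hinj : Function.Injective (slopeMap l) := by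
    intro a b hab
    exact congrArg Prod.fst hab
  rw [LinearMap.finrank_range_of_inj hinj, Complex.finrank_real_complex]

noncomputable def vertMap : ℂ →ₗ[ℝ] ℂ × ℂ where
  toFun z := (0, z)
  map_add' := by intro a b; simp
  map_smul' := by intro r z; simp [Prod.smul_def]

lemma finrank_vertLine : Module.finrank ℝ vertLine = 2 := by
  have : vertLine = LinearMap.range vertMap := by
    ext v
    simp only [mem_vertLine, LinearMap.mem_range]
    constructor
    · intro h; exact ⟨v.2, by simp [vertMap, Prod.ext_iff, h.symm]⟩
    · rintro ⟨z, hz⟩; rw [← hz]; rfl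
  rw [this]
  have hinj : Function.Injective vertMap := by
    intro a b hab
    simpa [vertMap, Prod.ext_iff] using hab
  rw [LinearMap.finrank_range_of_inj hinj, Complex.finrank_real_complex]

lemma sup_top_iff_inf_bot (P Q : Submodule ℝ (ℂ × ℂ)) (hP : Module.finrank ℝ P = 2)
    (hQ : Module.finrank ℝ Q = 2) : Q ⊔ P = ⊤ ↔ Q ⊓ P = ⊥ := by
  have key := Submodule.finrank_sup_add_finrank_inf_eq Q P
  rw [hP, hQ] at key
  constructor
  · intro h
    rw [h, finrank_top, finrank_CC] at key
    exact Submodule.finrank_eq_zero.1 (by omega)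
  · intro h
    rw [h, finrank_bot] at key
    apply Submodule.eq_top_of_finrank_eq
    rw [finrank_CC]; omega

lemma crit_iff (P : Submodule ℝ (ℂ × ℂ)) (hdim : Module.finrank ℝ P = 2) (l : ℂ) :
    lineSlope l ⊔ P ≠ ⊤ ↔ ∃ v ∈ P, v ≠ 0 ∧ v.2 = l * v.1 := by
  rw [Ne, sup_top_iff_inf_bot P (lineSlope l) hdim (finrank_lineSlope l),
    ← Ne, Submodule.ne_bot_iff]
  constructor
  · rintro ⟨v, hv, hv0⟩
    exact ⟨v, hv.2, hv0, hv.1⟩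
  · rintro ⟨v, hvP, hv0, hvl⟩
    exact ⟨v, ⟨hvl, hvP⟩, hv0⟩

lemma vert_crit_iff (P : Submodule ℝ (ℂ × ℂ)) (hdim : Module.finrank ℝ P = 2) :
    vertLine ⊔ P ≠ ⊤ ↔ ∃ v ∈ P, v ≠ 0 ∧ v.1 = 0 := by
  rw [Ne, sup_top_iff_inf_bot P vertLine hdim finrank_vertLine, ← Ne, Submodule.ne_bot_iff]
  constructor
  · rintro ⟨v, hv, hv0⟩
    exact ⟨v, hv.2, hv0, hv.1⟩
  · rintro ⟨v, hvP, hv0, hvl⟩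
    exact ⟨v, ⟨hvl, hvP⟩, hv0⟩

lemma map_JL_lineSlope (c : ℂ) : Submodule.map JL (lineSlope c) = lineSlope c := by
  ext v
  simp only [Submodule.mem_map, mem_lineSlope]
  constructor
  · rintro ⟨w, hw, rfl⟩
    show (Complex.I • w).2 = c * (Complex.I • w).1
    simp only [Prod.smul_snd, Prod.smul_fst, smul_eq_mul, hw]
    ring
  · intro hv
    refine ⟨(-Complex.I) • v, ?_, ?_⟩
    · show ((-Complex.I) • v).2 = c * ((-Complex.I) • v).1
      simp only [Prod.smul_snd, Prod.smul_fst, smul_eq_mul, hv]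
      ring
    · show Complex.I • (-Complex.I) • v = v
      rw [smul_smul]
      simp [Complex.I_mul_I]

lemma map_JL_vertLine : Submodule.map JL vertLine = vertLine := by
  ext v
  simp only [Submodule.mem_map, mem_vertLine]
  constructor
  · rintro ⟨w, hw, rfl⟩
    show (Complex.I • w).1 = 0
    simp [hw]
  · intro hv
    refine ⟨(-Complex.I) • v, by simp [mem_vertLine, hv], ?_⟩
    show Complex.I • (-Complex.I) • v = v
    rw [smul_smul]; simp [Complex.I_mul_I]

lemma exists_basis_pair (P : Submodule ℝ (ℂ × ℂ)) (hdim : Module.finrank ℝ P = 2) :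
    ∃ a b : ℂ × ℂ, (∀ s t : ℝ, s • a + t • b = 0 → s = 0 ∧ t = 0) ∧
      (∀ v, v ∈ P ↔ ∃ s t : ℝ, v = s • a + t • b) := by
  have : FiniteDimensional ℝ P := inferInstance
  let B := Module.finBasisOfFinrankEq ℝ P hdim
  refine ⟨(B 0 : ℂ × ℂ), (B 1 : ℂ × ℂ), ?_, ?_⟩
  · intro s t hst
    have h0 : s • B 0 + t • B 1 = 0 := by
      apply Subtype.ext
      rw [Submodule.coe_add, SetLike.val_smul, SetLike.val_smul, ZeroMemClass.coe_zero]
      exact hst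
    have := Fintype.linearIndependent_iff.1 B.linearIndependent ![s, t] (by
      rw [Fin.sum_univ_two]
      simp only [Matrix.cons_val_zero, Matrix.cons_val_one, Matrix.head_cons]
      exact h0)
    exact ⟨this 0, this 1⟩
  · intro v
    constructor
    · intro hv
      have := B.sum_repr ⟨v, hv⟩
      refine ⟨B.repr ⟨v, hv⟩ 0, B.repr ⟨v, hv⟩ 1, ?_⟩
      have h2 := congrArg (Subtype.val) this.symm
      rw [Fin.sum_univ_two, Submodule.coe_add, SetLike.val_smul, SetLike.val_smul] at h2
      exact h2
    · rintro ⟨s, t, rfl⟩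
      exact P.add_mem (P.smul_mem s (B 0).2) (P.smul_mem t (B 1).2)


lemma dep_of_im (A B : ℂ) (h : (starRingEnd ℂ A * B).im = 0) (hA : A ≠ 0) :
    ∃ r : ℝ, B = r * A := by
  refine ⟨(starRingEnd ℂ A * B).re / Complex.normSq A, ?_⟩
  have h1 : starRingEnd ℂ A * B = ((starRingEnd ℂ A * B).re : ℂ) :=
    Complex.ext rfl (by simpa using h)
  have hn : (Complex.normSq A : ℂ) ≠ 0 := by
    simpa [Complex.normSq_eq_zero] using hA
  rw [Complex.ofReal_div, ← h1, div_mul_eq_mul_div, eq_div_iff hn]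
  linear_combination -B * Complex.mul_conj A

lemma dep_iff (A B : ℂ) :
    (∃ s t : ℝ, ¬(s = 0 ∧ t = 0) ∧ (s : ℂ) * A + (t : ℂ) * B = 0) ↔
      (starRingEnd ℂ A * B).im = 0 := by
  constructor
  · rintro ⟨s, t, hst, heq⟩
    by_cases ht : t = 0
    · have hs : s ≠ 0 := fun h => hst ⟨h, ht⟩
      have hA : A = 0 := by
        have : (s : ℂ) ≠ 0 := by exact_mod_cast hs
        simp only [ht, Complex.ofReal_zero, zero_mul, add_zero] at heq
        exact (mul_eq_zero.1 heq).resolve_left this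
      simp [hA]
    · have hB : B = ((-s/t : ℝ) : ℂ) * A := by
        have htC : (t : ℂ) ≠ 0 := by exact_mod_cast ht
        push_cast
        field_simp
        linear_combination heq
      rw [hB]
      simp [Complex.mul_im, Complex.mul_re, Complex.conj_re, Complex.conj_im]
      ring
  · intro h
    by_cases hA : A = 0
    · exact ⟨1, 0, by simp, by simp [hA]⟩
    · obtain ⟨r, hr⟩ := dep_of_im A B h hA
      exact ⟨r, -1, by simp, by push_cast; linear_combination -hr⟩

lemma F_expand (a b : ℂ × ℂ) (l : ℂ) :
    ((starRingEnd ℂ (a.2 - l * a.1)) * (b.2 - l * b.1)).im =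
      (starRingEnd ℂ a.1 * b.1).im * (l.re ^ 2 + l.im ^ 2)
      - ((starRingEnd ℂ a.2 * b.1).im + (starRingEnd ℂ a.1 * b.2).im) * l.re
      - ((starRingEnd ℂ a.2 * b.1).re - (starRingEnd ℂ a.1 * b.2).re) * l.im
      + (starRingEnd ℂ a.2 * b.2).im := by
  simp only [Complex.mul_im, Complex.mul_re, Complex.sub_re, Complex.sub_im,
    Complex.conj_re, Complex.conj_im]
  ring

set_option maxHeartbeats 2000000 in
/-- for a real 2-plane `P ⊂ ℂ²` which is not a complex line, the set of
slopes `λ ∈ ℙ¹(ℂ) = ℂ ∪ {∞}` of complex lines through `0` non-transverse to `P` is a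
circle on the Riemann sphere: either a Euclidean circle in ℂ (with the vertical line
`∞` transverse), or a real affine line in ℂ together with `∞` (vertical line
non-transverse). -/
theorem stmt_6 (P : Submodule ℝ (ℂ × ℂ)) (hdim : Module.finrank ℝ P = 2)
    (hnc : Submodule.map JL P ≠ P) :
    (∃ (c : ℂ) (r : ℝ), 0 < r ∧ {l : ℂ | lineSlope l ⊔ P ≠ ⊤} = Metric.sphere c r ∧
      vertLine ⊔ P = ⊤) ∨
    (∃ z w : ℂ, w ≠ 0 ∧ {l : ℂ | lineSlope l ⊔ P ≠ ⊤} = {u : ℂ | ∃ t : ℝ, u = z + t * w} ∧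
      vertLine ⊔ P ≠ ⊤) := by
  obtain ⟨a, b, hind, hspan⟩ := exists_basis_pair P hdim
  have ha0 : a ≠ 0 := by
    intro h
    have := (hind 1 0 (by simp [h])).1
    norm_num at this
  have hb0 : b ≠ 0 := by
    intro h
    have := (hind 0 1 (by simp [h])).2
    norm_num at this
  have hcrit : ∀ l : ℂ, (lineSlope l ⊔ P ≠ ⊤) ↔
      (starRingEnd ℂ a.1 * b.1).im * (l.re ^ 2 + l.im ^ 2)
      - ((starRingEnd ℂ a.2 * b.1).im + (starRingEnd ℂ a.1 * b.2).im) * l.re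
      - ((starRingEnd ℂ a.2 * b.1).re - (starRingEnd ℂ a.1 * b.2).re) * l.im
      + (starRingEnd ℂ a.2 * b.2).im = 0 := by
    intro l
    rw [crit_iff P hdim l, ← F_expand a b l, ← dep_iff]
    constructor
    · rintro ⟨v, hvP, hv0, hvl⟩
      obtain ⟨s, t, rfl⟩ := (hspan v).1 hvP
      refine ⟨s, t, ?_, ?_⟩
      · rintro ⟨rfl, rfl⟩
        simp at hv0
      · have he : (s : ℂ) * (a.2 - l * a.1) + (t : ℂ) * (b.2 - l * b.1)
            = (s • a + t • b).2 - l * (s • a + t • b).1 := by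
          simp only [Prod.fst_add, Prod.snd_add, Prod.smul_fst, Prod.smul_snd,
            Complex.real_smul]
          ring
        rw [he, hvl, sub_self]
    · rintro ⟨s, t, hst, heq⟩
      refine ⟨s • a + t • b, (hspan _).2 ⟨s, t, rfl⟩, ?_, ?_⟩
      · intro h0
        exact hst (hind s t h0)
      · have he : (s • a + t • b).2 - l * (s • a + t • b).1 = 0 := by
          rw [← heq]
          simp only [Prod.fst_add, Prod.snd_add, Prod.smul_fst, Prod.smul_snd,
            Complex.real_smul]
          ring
        exact sub_eq_zero.1 he
  set α := (starRingEnd ℂ a.1 * b.1).im with hαdef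
  set p := (starRingEnd ℂ a.2 * b.1).im + (starRingEnd ℂ a.1 * b.2).im with hpdef
  set q := (starRingEnd ℂ a.2 * b.1).re - (starRingEnd ℂ a.1 * b.2).re with hqdef
  set c0 := (starRingEnd ℂ a.2 * b.2).im with hc0def
  clear_value α p q c0
  by_cases hα0 : α = 0
  · -- RIGHT case: line
    right
    -- vertical line is non-transverse
    have hvert : vertLine ⊔ P ≠ ⊤ := by
      rw [vert_crit_iff P hdim]
      obtain ⟨s, t, hst, h1⟩ := (dep_iff a.1 b.1).2 (hαdef.symm.trans hα0)
      refine ⟨s • a + t • b, (hspan _).2 ⟨s, t, rfl⟩, ?_, ?_⟩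
      · intro h0
        exact hst (hind s t h0)
      · simp only [Prod.fst_add, Prod.smul_fst, Complex.real_smul]
        exact h1
    -- p, q are not both zero
    have hpq : ¬(p = 0 ∧ q = 0) := by
      rintro ⟨hp0, hq0⟩
      -- first: c0 = 0
      have hab1 : ¬(a.1 = 0 ∧ b.1 = 0) := by
        rintro ⟨ha1, hb1⟩
        apply hnc
        have hle : P ≤ vertLine := by
          intro v hv
          obtain ⟨s, t, rfl⟩ := (hspan v).1 hv
          show (s • a + t • b).1 = 0
          simp only [Prod.fst_add, Prod.smul_fst, ha1, hb1, smul_zero, add_zero]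
        have hPv : P = vertLine :=
          Submodule.eq_of_le_of_finrank_eq hle (by rw [hdim, finrank_vertLine])
        rw [hPv, map_JL_vertLine]
      have hc00 : c0 = 0 := by
        obtain ⟨v, hvP, hv0, hv1⟩ :
            ∃ v : ℂ × ℂ, v ∈ P ∧ v ≠ 0 ∧ v.1 ≠ 0 := by
          rcases Classical.em (a.1 = 0) with ha1 | ha1
          · rcases Classical.em (b.1 = 0) with hb1 | hb1
            · exact absurd ⟨ha1, hb1⟩ hab1
            · exact ⟨b, (hspan b).2 ⟨0, 1, by simp⟩, hb0, hb1⟩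
          · exact ⟨a, (hspan a).2 ⟨1, 0, by simp⟩, ha0, ha1⟩
        have hne : lineSlope (v.2 / v.1) ⊔ P ≠ ⊤ :=
          (crit_iff P hdim _).2 ⟨v, hvP, hv0, by field_simp⟩
        have hE := (hcrit _).1 hne
        rw [hα0, hp0, hq0] at hE
        linarith [hE]
      -- now all four coefficients vanish: derive b = r • a
      have hq0' : (starRingEnd ℂ a.2 * b.1).re - (starRingEnd ℂ a.1 * b.2).re = 0 := by
        rw [← hqdef]; exact hq0
      have hp0' : (starRingEnd ℂ a.2 * b.1).im + (starRingEnd ℂ a.1 * b.2).im = 0 := by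
        rw [← hpdef]; exact hp0
      have hE : starRingEnd ℂ a.2 * b.1 = a.1 * starRingEnd ℂ b.2 := by
        apply Complex.ext
        · simp only [Complex.mul_re, Complex.mul_im, Complex.conj_re, Complex.conj_im] at hq0' ⊢
          linarith
        · simp only [Complex.mul_re, Complex.mul_im, Complex.conj_re, Complex.conj_im] at hp0' ⊢
          linarith
      have hba : ∃ r : ℝ, b = r • a := by
        rcases Classical.em (a.1 = 0) with ha1 | ha1
        · have ha2 : a.2 ≠ 0 := by
            intro h2
            exact ha0 (Prod.ext ha1 h2)
          have hb1 : b.1 = 0 := by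
            have := hE
            rw [ha1, zero_mul] at this
            have hc : starRingEnd ℂ a.2 ≠ 0 := by simpa using ha2
            exact (mul_eq_zero.1 this).resolve_left hc
          have him : (starRingEnd ℂ a.2 * b.2).im = 0 := by
            rw [← hc0def]; exact hc00
          obtain ⟨r, hr⟩ := dep_of_im a.2 b.2 him ha2
          refine ⟨r, Prod.ext ?_ ?_⟩
          · simp [hb1, ha1]
          · simpa [Complex.real_smul] using hr
        · obtain ⟨r, hr1⟩ := dep_of_im a.1 b.1 (hαdef.symm.trans hα0) ha1
          have hr2 : b.2 = r * a.2 := by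
            have h2 : a.1 * starRingEnd ℂ b.2 = a.1 * ((r : ℂ) * starRingEnd ℂ a.2) := by
              rw [← hE, hr1]
              ring
            have h3 := mul_left_cancel₀ ha1 h2
            have h4 := congrArg (starRingEnd ℂ) h3
            simpa [Complex.conj_ofReal] using h4
          exact ⟨r, Prod.ext (by simpa [Complex.real_smul] using hr1)
            (by simpa [Complex.real_smul] using hr2)⟩
      obtain ⟨r, hr⟩ := hba
      have : r • a + (-1 : ℝ) • b = 0 := by
        rw [hr]
        module
      have := (hind r (-1) this).2
      norm_num at this
    -- define the line
    have hN : 0 < p ^ 2 + q ^ 2 := by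
      rcases not_and_or.1 hpq with h | h
      · positivity
      · positivity
    refine ⟨(↑(c0 * p / (p ^ 2 + q ^ 2)) + ↑(c0 * q / (p ^ 2 + q ^ 2)) * Complex.I),
      (↑(-q) + ↑p * Complex.I), ?_, ?_, hvert⟩
    · intro hw
      have hre := congrArg Complex.re hw
      have him := congrArg Complex.im hw
      simp at hre him
      exact hpq ⟨him, by linarith⟩
    · ext l
      simp only [Set.mem_setOf_eq]
      rw [hcrit l, hα0]
      constructor
      · intro hE
        have hE' : p * l.re + q * l.im = c0 := by linarith [hE]
        refine ⟨(p * l.im - q * l.re) / (p ^ 2 + q ^ 2), ?_⟩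
        apply Complex.ext
        · simp only [Complex.add_re, Complex.mul_re, Complex.ofReal_re, Complex.ofReal_im,
            Complex.I_re, Complex.I_im]
          field_simp
          linear_combination p * hE'
        · simp only [Complex.add_im, Complex.mul_im, Complex.ofReal_re, Complex.ofReal_im,
            Complex.I_re, Complex.I_im]
          field_simp
          linear_combination q * hE'
      · rintro ⟨t, rfl⟩
        simp only [Complex.add_re, Complex.add_im, Complex.mul_re, Complex.mul_im,
          Complex.ofReal_re, Complex.ofReal_im, Complex.I_re, Complex.I_im]
        field_simp
        ring
  · -- LEFT case: circle
    left
    -- vertical line is transverse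
    have hva : ∀ v ∈ P, v.1 = 0 → v = 0 := by
      intro v hvP hv1
      obtain ⟨s, t, rfl⟩ := (hspan v).1 hvP
      by_cases hst : s = 0 ∧ t = 0
      · rw [hst.1, hst.2]; simp
      · exfalso
        apply hα0
        rw [hαdef]
        apply (dep_iff a.1 b.1).1
        refine ⟨s, t, hst, ?_⟩
        simpa only [Prod.fst_add, Prod.smul_fst, Complex.real_smul] using hv1
    have hvert : vertLine ⊔ P = ⊤ := by
      rw [sup_top_iff_inf_bot P vertLine hdim finrank_vertLine]
      rw [Submodule.eq_bot_iff]
      intro v hv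
      rw [Submodule.mem_inf] at hv
      exact hva v hv.2 hv.1
    -- the set is nonempty: a.1 ≠ 0
    have ha1 : a.1 ≠ 0 := by
      intro h1
      apply hα0
      rw [hαdef, h1]
      simp
    have hnea : lineSlope (a.2 / a.1) ⊔ P ≠ ⊤ :=
      (crit_iff P hdim _).2 ⟨a, (hspan a).2 ⟨1, 0, by simp⟩, ha0, by field_simp⟩
    have hE0 := (hcrit _).1 hnea
    set x0 := ((a.2 / a.1 : ℂ)).re
    set y0 := ((a.2 / a.1 : ℂ)).im
    have hD0 : 0 ≤ p ^ 2 + q ^ 2 - 4 * α * c0 := by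
      have h4 : p ^ 2 + q ^ 2 - 4 * α * c0
          = (2 * α * x0 - p) ^ 2 + (2 * α * y0 - q) ^ 2 := by
        linear_combination (-4 * α) * hE0
      rw [h4]
      positivity
    have hDne : p ^ 2 + q ^ 2 - 4 * α * c0 ≠ 0 := by
      intro hD
      apply hnc
      have hle : P ≤ lineSlope (↑(p / (2 * α)) + ↑(q / (2 * α)) * Complex.I) := by
        intro v hvP
        show v.2 = _ * v.1
        by_cases hv0 : v = 0
        · rw [hv0]; simp
        · have hv1 : v.1 ≠ 0 := by
            intro h1
            exact hv0 (hva v hvP h1)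
          have hne : lineSlope (v.2 / v.1) ⊔ P ≠ ⊤ :=
            (crit_iff P hdim _).2 ⟨v, hvP, hv0, by field_simp⟩
          have hE := (hcrit _).1 hne
          have h1 : (2 * α * (v.2 / v.1).re - p) ^ 2 + (2 * α * (v.2 / v.1).im - q) ^ 2 = 0 := by
            linear_combination 4 * α * hE + hD
          have h2 : 2 * α * (v.2 / v.1).re - p = 0 := by
            have := le_antisymm (by linarith [h1, sq_nonneg (2 * α * (v.2 / v.1).im - q)] :
              (2 * α * (v.2 / v.1).re - p) ^ 2 ≤ 0) (sq_nonneg _)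
            exact sq_eq_zero_iff.1 this
          have h3 : 2 * α * (v.2 / v.1).im - q = 0 := by
            have := le_antisymm (by linarith [h1, sq_nonneg (2 * α * (v.2 / v.1).re - p)] :
              (2 * α * (v.2 / v.1).im - q) ^ 2 ≤ 0) (sq_nonneg _)
            exact sq_eq_zero_iff.1 this
          have hxx : (v.2 / v.1).re = p / (2 * α) ∧ (v.2 / v.1).im = q / (2 * α) := by
            constructor
            · field_simp
              linarith
            · field_simp
              linarith
          have hvc : v.2 / v.1 = ↑(p / (2 * α)) + ↑(q / (2 * α)) * Complex.I := by
            apply Complex.ext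
            · simp only [Complex.add_re, Complex.mul_re, Complex.ofReal_re,
                Complex.ofReal_im, Complex.I_re, Complex.I_im]
              norm_num
              exact hxx.1
            · simp only [Complex.add_im, Complex.mul_im, Complex.ofReal_re,
                Complex.ofReal_im, Complex.I_re, Complex.I_im]
              norm_num
              exact hxx.2
          rw [← hvc]
          field_simp
      have := Submodule.eq_of_le_of_finrank_eq hle (by rw [hdim, finrank_lineSlope])
      rw [this, map_JL_lineSlope]
    have hD : 0 < p ^ 2 + q ^ 2 - 4 * α * c0 := lt_of_le_of_ne hD0 (Ne.symm hDne)
    refine ⟨↑(p / (2 * α)) + ↑(q / (2 * α)) * Complex.I,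
      Real.sqrt (p ^ 2 + q ^ 2 - 4 * α * c0) / (2 * |α|), ?_, ?_, hvert⟩
    · have h1 : 0 < Real.sqrt (p ^ 2 + q ^ 2 - 4 * α * c0) := Real.sqrt_pos.2 hD
      have h2 : 0 < |α| := abs_pos.2 hα0
      positivity
    · ext l
      simp only [Set.mem_setOf_eq, Metric.mem_sphere]
      rw [hcrit l, Complex.dist_eq]
      have h4 : (4 : ℝ) * α ^ 2 ≠ 0 := by positivity
      have hr2 : (Real.sqrt (p ^ 2 + q ^ 2 - 4 * α * c0) / (2 * |α|)) ^ 2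
          = (p ^ 2 + q ^ 2 - 4 * α * c0) / (4 * α ^ 2) := by
        rw [div_pow, Real.sq_sqrt hD0, mul_pow, _root_.sq_abs]
        norm_num
      have habs : ‖(l - (↑(p / (2 * α)) + ↑(q / (2 * α)) * Complex.I))‖
            = Real.sqrt (p ^ 2 + q ^ 2 - 4 * α * c0) / (2 * |α|)
          ↔ Complex.normSq (l - (↑(p / (2 * α)) + ↑(q / (2 * α)) * Complex.I))
            = (p ^ 2 + q ^ 2 - 4 * α * c0) / (4 * α ^ 2) := by
        rw [← hr2]
        constructor
        · intro h
          rw [← Complex.sq_norm, h]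
        · intro h
          rw [Complex.norm_def, h, Real.sqrt_sq (by positivity)]
      rw [habs, eq_div_iff h4]
      have hns2 : Complex.normSq (l - (↑(p / (2 * α)) + ↑(q / (2 * α)) * Complex.I))
            * (4 * α ^ 2)
          = (2 * α * l.re - p) ^ 2 + (2 * α * l.im - q) ^ 2 := by
        simp only [Complex.normSq_apply, Complex.sub_re, Complex.sub_im, Complex.add_re,
          Complex.add_im, Complex.mul_re, Complex.mul_im, Complex.ofReal_re, Complex.ofReal_im,
          Complex.I_re, Complex.I_im]
        field_simp
        ring
      rw [hns2]
      constructor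
      · intro hF
        linear_combination 4 * α * hF
      · intro hbig
        have h5 : 4 * α * (α * (l.re ^ 2 + l.im ^ 2) - p * l.re - q * l.im + c0) = 0 := by
          linear_combination hbig
        have h6 : (4 : ℝ) * α ≠ 0 := mul_ne_zero (by norm_num) hα0
        exact (mul_eq_zero.1 h5).resolve_left h6
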